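/- arXiv:2312.12618 — 2 statements merged into one kernel-verified Lean document; each statement's English description precedes it below -/
import Mathlib

section
/- Let G be a finite simple connected graph, let r ∈ V(G), and let w_1, …, w_T be the weight functions of tree strategies of G rooted at r. Then π(G, r) ≤ z_{G,r} + 1, where z_{G,r} is the maximum of Σ_{v∈V(G)\{r}} C(v) over all configurations C on V(G) satisfying w_t·C ≤ w_t·1_G for every t = 1, …, T. -/
open Finset

/-- A single pebbling move on graph `G`: remove two pebbles from a vertex `u` and
place one pebble on a vertex `v` adjacent to `u`. -/
def IsPebblingMove {V : Type*} (G : SimpleGraph V) (C C' : V → ℕ) : Prop :=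
  ∃ u v, G.Adj u v ∧ 2 ≤ C u ∧
    C' u = C u - 2 ∧ C' v = C v + 1 ∧ ∀ w, w ≠ u → w ≠ v → C' w = C w

/-- A configuration `C` is `r`-solvable if some sequence of pebbling moves starting
from `C` places at least one pebble on `r`. -/
def Solvable {V : Type*} (G : SimpleGraph V) (r : V) (C : V → ℕ) : Prop :=
  ∃ C', Relation.ReflTransGen (IsPebblingMove G) C C' ∧ 1 ≤ C' r

/-- The rooted pebbling number `π(G, r)`: the smallest `k` such that every
configuration of size `k` is `r`-solvable. -/
noncomputable def pebblingNumber {V : Type*} [Fintype V] (G : SimpleGraph V) (r : V) : ℕ :=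
  sInf {k : ℕ | ∀ C : V → ℕ, (∑ v, C v) = k → Solvable G r C}

/-- A tree strategy of `G` rooted at `r`: a subtree of `G` containing `r` (encoded by its
vertex set and parent map) together with an associated nonnegative weight function. -/
structure TreeStrategy {V : Type*} (G : SimpleGraph V) (r : V) where
  /-- the vertices of the subtree -/
  verts : Set V
  /-- the parent map of the subtree (towards the root) -/
  parent : V → V
  root_mem : r ∈ verts
  parent_mem : ∀ v ∈ verts, v ≠ r → parent v ∈ verts
  parent_adj : ∀ v ∈ verts, v ≠ r → G.Adj (parent v) v
  reaches_root : ∀ v ∈ verts, ∃ n : ℕ, parent^[n] v = r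
  /-- the weight function -/
  weight : V → ℝ
  weight_nonneg : ∀ v, 0 ≤ weight v
  weight_root : weight r = 0
  weight_parent : ∀ v ∈ verts, v ≠ r → ¬ G.Adj v r → 2 * weight v ≤ weight (parent v)
  weight_zero : ∀ v ∉ verts, weight v = 0


private lemma wfl_aux {V : Type*} [Fintype V] [DecidableEq V] (G : SimpleGraph V) (r : V)
    (s : TreeStrategy G r) :
    ∀ C : V → ℕ, ¬ Solvable G r C → ∑ v, s.weight v * (C v : ℝ) ≤ ∑ v, s.weight v := by
  suffices H : ∀ n : ℕ, ∀ C : V → ℕ, ∑ v, C v = n → ¬ Solvable G r C →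
      ∑ v, s.weight v * (C v : ℝ) ≤ ∑ v, s.weight v from fun C h => H _ C rfl h
  intro n
  induction n using Nat.strong_induction_on with
  | _ n ih =>
    intro C hsum hns
    by_cases hcase : ∀ v ∈ s.verts, v ≠ r → C v ≤ 1
    · apply Finset.sum_le_sum
      intro v _
      by_cases hv : v ∈ s.verts
      · by_cases hvr : v = r
        · subst hvr; rw [s.weight_root]; simp
        · have h1 : (C v : ℝ) ≤ 1 := by exact_mod_cast hcase v hv hvr
          nlinarith [s.weight_nonneg v]
      · rw [s.weight_zero v hv]; simp
    · push_neg at hcase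
      obtain ⟨v, hv, hvr, hC2'⟩ := hcase
      have hC2 : 2 ≤ C v := hC2'
      by_cases hadj : G.Adj v r
      · exfalso
        apply hns
        set C' : V → ℕ := Function.update (Function.update C v (C v - 2)) r (C r + 1) with hC'
        have hrv : r ≠ v := fun h => hvr h.symm
        refine ⟨C', Relation.ReflTransGen.single ⟨v, r, hadj, hC2, ?_, ?_, ?_⟩, ?_⟩
        · rw [hC', Function.update_of_ne (Ne.symm hrv), Function.update_self]
        · rw [hC', Function.update_self]
        · intro w hwv hwr
          rw [hC', Function.update_of_ne hwr, Function.update_of_ne hwv]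
        · rw [hC', Function.update_self]; omega
      · set u := s.parent v with hu
        have hadjuv : G.Adj u v := s.parent_adj v hv hvr
        have hur : u ≠ r := by
          intro h
          exact hadj (by rw [h] at hadjuv; exact hadjuv.symm)
        have huv : u ≠ v := fun h => G.irrefl (h ▸ hadjuv)
        set C' : V → ℕ := Function.update (Function.update C v (C v - 2)) u (C u + 1) with hC'
        have hC'v : C' v = C v - 2 := by
          rw [hC', Function.update_of_ne (Ne.symm huv), Function.update_self]
        have hC'u : C' u = C u + 1 := by
          rw [hC', Function.update_self]
        have hC'w : ∀ w, w ≠ v → w ≠ u → C' w = C w := by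
          intro w hwv hwu
          rw [hC', Function.update_of_ne hwu, Function.update_of_ne hwv]
        have hmove : IsPebblingMove G C C' := ⟨v, u, hadjuv.symm, hC2, hC'v, hC'u, hC'w⟩
        have hns' : ¬ Solvable G r C' := by
          rintro ⟨C'', hrel, h1⟩
          exact hns ⟨C'', hrel.head hmove, h1⟩
        have hrest : ∀ D : V → ℕ, ∑ x, D x = D v + (D u + ∑ x ∈ (univ.erase v).erase u, D x) := by
          intro D
          rw [Finset.add_sum_erase _ D (Finset.mem_erase.mpr ⟨huv, Finset.mem_univ u⟩),
            Finset.add_sum_erase _ D (Finset.mem_univ v)]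
        have hresteq : ∑ x ∈ (univ.erase v).erase u, C' x = ∑ x ∈ (univ.erase v).erase u, C x := by
          apply Finset.sum_congr rfl
          intro x hx
          simp only [Finset.mem_erase] at hx
          exact hC'w x hx.2.1 hx.1
        have hsum' : ∑ x, C' x + 1 = n := by
          rw [hrest C'] at *
          rw [hrest C] at hsum
          rw [hresteq, hC'v, hC'u]
          omega
        have hIH := ih (∑ x, C' x) (by omega) C' rfl hns'
        refine le_trans ?_ hIH
        have hwrest : ∀ D : V → ℕ, ∑ x, s.weight x * (D x : ℝ) =
            s.weight v * (D v : ℝ) + (s.weight u * (D u : ℝ) +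
              ∑ x ∈ (univ.erase v).erase u, s.weight x * (D x : ℝ)) := by
          intro D
          rw [Finset.add_sum_erase _ (fun x => s.weight x * (D x : ℝ))
              (Finset.mem_erase.mpr ⟨huv, Finset.mem_univ u⟩),
            Finset.add_sum_erase _ (fun x => s.weight x * (D x : ℝ)) (Finset.mem_univ v)]
        rw [hwrest C, hwrest C']
        have hwresteq : ∑ x ∈ (univ.erase v).erase u, s.weight x * (C' x : ℝ) =
            ∑ x ∈ (univ.erase v).erase u, s.weight x * (C x : ℝ) := by
          apply Finset.sum_congr rfl
          intro x hx
          simp only [Finset.mem_erase] at hx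
          rw [hC'w x hx.2.1 hx.1]
        rw [hwresteq, hC'v, hC'u]
        have hcast : ((C v - 2 : ℕ) : ℝ) = (C v : ℝ) - 2 := by
          push_cast [hC2]; ring
        rw [hcast]
        have hw := s.weight_parent v hv hvr hadj
        push_cast
        nlinarith [s.weight_nonneg v, s.weight_nonneg u]

/-- If `w_1, …, w_T` are weight functions of tree strategies of `G` rooted at `r`, then
`π(G, r) ≤ z + 1`, where `z` is the maximum of `Σ_{v ≠ r} C(v)` over all configurations `C`
satisfying `w_t·C ≤ w_t·1_G` for every `t`. -/
theorem pebbling_le_lp_optimum {V : Type*} [Fintype V] [DecidableEq V]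
    (G : SimpleGraph V) (hG : G.Connected) (r : V) (T : ℕ)
    (S : Fin T → TreeStrategy G r) (z : ℕ)
    (hz : IsGreatest {k : ℕ | ∃ C : V → ℕ,
        (∀ t : Fin T, ∑ v, (S t).weight v * (C v : ℝ) ≤ ∑ v, (S t).weight v) ∧
        k = ∑ v ∈ Finset.univ.erase r, C v} z) :
    pebblingNumber G r ≤ z + 1 := by
  apply Nat.sInf_le
  intro C hC
  by_contra hns
  have hr : C r = 0 := by
    by_contra h
    exact hns ⟨C, Relation.ReflTransGen.refl, by omega⟩
  have hmem : (∑ v ∈ Finset.univ.erase r, C v) ∈ {k : ℕ | ∃ C : V → ℕ,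
      (∀ t : Fin T, ∑ v, (S t).weight v * (C v : ℝ) ≤ ∑ v, (S t).weight v) ∧
      k = ∑ v ∈ Finset.univ.erase r, C v} :=
    ⟨C, fun t => wfl_aux G r (S t) C hns, rfl⟩
  have hle := hz.2 hmem
  have hsplit : C r + ∑ v ∈ Finset.univ.erase r, C v = ∑ v, C v :=
    Finset.add_sum_erase _ C (Finset.mem_univ r)
  omega
end

section
/- Covering Lemma: Let G be a finite simple connected graph rooted at r ∈ V(G), let w' be a conic combination (a nonnegative real linear combination) of weight functions of tree strategies of G rooted at r, and let K and M be positive constants. If w'(v) ≥ K for all v ∈ V(G)\{r} and Σ_{v∈V(G)\{r}} w'(v) < M, then π(G, r) ≤ ⌊M/K⌋ + 1. -/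
open Finset

lemma solvable_of_move {V : Type*} (G : SimpleGraph V) (r : V) {C C' : V → ℕ}
    (hm : IsPebblingMove G C C') (h : Solvable G r C') : Solvable G r C := by
  obtain ⟨D, hD, hr⟩ := h
  exact ⟨D, .head hm hD, hr⟩

lemma mk_move {V : Type*} [DecidableEq V] (G : SimpleGraph V) {u t : V} (hadj : G.Adj u t)
    (C : V → ℕ) (h2 : 2 ≤ C u) :
    IsPebblingMove G C (Function.update (Function.update C u (C u - 2)) t (C t + 1)) := by
  have hne : u ≠ t := G.ne_of_adj hadj
  refine ⟨u, t, hadj, h2, ?_, ?_, ?_⟩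
  · rw [Function.update_of_ne hne, Function.update_self]
  · rw [Function.update_self]
  · intro w hwu hwt
    rw [Function.update_of_ne hwt, Function.update_of_ne hwu]

lemma tree_weight_bound {V : Type*} [Fintype V] [DecidableEq V]
    (G : SimpleGraph V) (r : V) (T : TreeStrategy G r) :
    ∀ N (C : V → ℕ), ∑ v, C v = N → ¬ Solvable G r C →
      ∑ v, T.weight v * C v ≤ ∑ v ∈ Finset.univ.erase r, T.weight v := by
  intro N
  induction N using Nat.strong_induction_on with
  | _ N ih =>
  intro C hN hC
  by_cases hcase : ∃ u ∈ T.verts, 2 ≤ C u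
  · obtain ⟨u, hu, hu2⟩ := hcase
    have hur : u ≠ r := by
      rintro rfl
      exact hC ⟨C, .refl, by omega⟩
    have hadj : ¬ G.Adj u r := by
      intro hadj
      exact hC (solvable_of_move G r (mk_move G hadj C hu2)
        ⟨_, .refl, by rw [Function.update_self]; omega⟩)
    set p := T.parent u with hp
    have hpadj : G.Adj u p := (T.parent_adj u hu hur).symm
    have hpu : u ≠ p := G.ne_of_adj hpadj
    set C'' := Function.update (Function.update C u (C u - 2)) p (C p + 1) with hC''def
    have hmove : IsPebblingMove G C C'' := mk_move G hpadj C hu2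
    have hC'' : ¬ Solvable G r C'' := fun h => hC (solvable_of_move G r hmove h)
    have hCu : C'' u = C u - 2 := by
      rw [hC''def, Function.update_of_ne hpu, Function.update_self]
    have hCp : C'' p = C p + 1 := by
      rw [hC''def, Function.update_self]
    have hCo : ∀ w, w ≠ u → w ≠ p → C'' w = C w := by
      intro w h1 h2
      rw [hC''def, Function.update_of_ne h2, Function.update_of_ne h1]
    have hup' : u ∈ univ.erase p := Finset.mem_erase.2 ⟨hpu, mem_univ u⟩
    -- sum of C''
    have hsplitC : ∀ D : V → ℕ, ∑ v, D v = D p + (D u + ∑ v ∈ (univ.erase p).erase u, D v) := by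
      intro D
      rw [Finset.add_sum_erase _ D hup', Finset.add_sum_erase _ D (mem_univ p)]
    have hrest : ∑ v ∈ (univ.erase p).erase u, C'' v = ∑ v ∈ (univ.erase p).erase u, C v := by
      apply Finset.sum_congr rfl
      intro v hv
      have h1 := (Finset.mem_erase.1 hv).1
      have h2 := (Finset.mem_erase.1 (Finset.mem_erase.1 hv).2).1
      exact hCo v h1 h2
    have hsum'' : ∑ v, C'' v = N - 1 ∧ 1 ≤ N := by
      constructor
      · rw [hsplitC C'', hCu, hCp, hrest]
        rw [hsplitC C] at hN
        omega
      · rw [hsplitC C] at hN; omega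
    have hIH := ih (N - 1) (by omega) C'' hsum''.1 hC''
    refine le_trans ?_ hIH
    -- weight sums
    have hwsplit : ∀ D : V → ℕ, ∑ v, T.weight v * D v =
        T.weight p * D p + (T.weight u * D u +
          ∑ v ∈ (univ.erase p).erase u, T.weight v * D v) := by
      intro D
      rw [Finset.add_sum_erase _ (fun v => T.weight v * D v) hup',
        Finset.add_sum_erase _ (fun v => T.weight v * D v) (mem_univ p)]
    rw [hwsplit C, hwsplit C'', hCu, hCp]
    have hwrest : ∑ v ∈ (univ.erase p).erase u, T.weight v * (C'' v : ℝ) =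
        ∑ v ∈ (univ.erase p).erase u, T.weight v * (C v : ℝ) := by
      apply Finset.sum_congr rfl
      intro v hv
      have h1 := (Finset.mem_erase.1 hv).1
      have h2 := (Finset.mem_erase.1 (Finset.mem_erase.1 hv).2).1
      rw [hCo v h1 h2]
    rw [hwrest]
    have hcast : ((C u - 2 : ℕ) : ℝ) = (C u : ℝ) - 2 := by
      rw [Nat.cast_sub hu2]; norm_num
    rw [hcast]
    push_cast
    have hkey : 2 * T.weight u ≤ T.weight p := T.weight_parent u hu hur hadj
    nlinarith [T.weight_nonneg u, T.weight_nonneg p]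
  · push_neg at hcase
    have : ∑ v, T.weight v * C v = T.weight r * C r + ∑ v ∈ univ.erase r, T.weight v * C v :=
      (Finset.add_sum_erase _ _ (mem_univ r)).symm
    rw [this, T.weight_root, zero_mul, zero_add]
    apply Finset.sum_le_sum
    intro v _
    by_cases hvT : v ∈ T.verts
    · have := hcase v hvT
      calc T.weight v * C v ≤ T.weight v * 1 := by
            apply mul_le_mul_of_nonneg_left _ (T.weight_nonneg v)
            exact_mod_cast Nat.lt_succ_iff.mp this
        _ = T.weight v := mul_one _
    · rw [T.weight_zero v hvT, zero_mul]

/-- **Covering Lemma.** Let `w'` be a conic combination of weight functions of tree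
strategies of `G` rooted at `r`, and let `K, M > 0`. If `w'(v) ≥ K` for all `v ≠ r`
and `Σ_{v ≠ r} w'(v) < M`, then `π(G, r) ≤ ⌊M/K⌋ + 1`. -/
theorem covering_lemma {V : Type*} [Fintype V] [DecidableEq V]
    (G : SimpleGraph V) (hG : G.Connected) (r : V)
    (n : ℕ) (S : Fin n → TreeStrategy G r) (c : Fin n → ℝ) (hc : ∀ i, 0 ≤ c i)
    (w' : V → ℝ) (hw' : ∀ v, w' v = ∑ i, c i * (S i).weight v)
    (K M : ℝ) (hK : 0 < K) (hM : 0 < M)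
    (hlow : ∀ v, v ≠ r → K ≤ w' v)
    (hsum : ∑ v ∈ Finset.univ.erase r, w' v < M) :
    pebblingNumber G r ≤ ⌊M / K⌋₊ + 1 := by
  apply Nat.sInf_le
  intro C hCsum
  by_contra hns
  have hbound : ∀ i, ∑ v, (S i).weight v * C v ≤ ∑ v ∈ univ.erase r, (S i).weight v :=
    fun i => tree_weight_bound G r (S i) _ C rfl hns
  have h1 : ∑ v, w' v * C v ≤ ∑ v ∈ univ.erase r, w' v := by
    calc ∑ v, w' v * C v = ∑ i, c i * ∑ v, (S i).weight v * (C v : ℝ) := by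
          simp_rw [hw', Finset.sum_mul, Finset.mul_sum]
          rw [Finset.sum_comm]
          apply Finset.sum_congr rfl; intro i _
          apply Finset.sum_congr rfl; intro v _
          ring
      _ ≤ ∑ i, c i * ∑ v ∈ univ.erase r, (S i).weight v :=
          Finset.sum_le_sum fun i _ => mul_le_mul_of_nonneg_left (hbound i) (hc i)
      _ = ∑ v ∈ univ.erase r, w' v := by
          simp_rw [hw', Finset.mul_sum]
          rw [Finset.sum_comm]
  have hCr : C r = 0 := by
    by_contra h
    exact hns ⟨C, .refl, by omega⟩
  have h2 : K * ((⌊M / K⌋₊ : ℝ) + 1) ≤ ∑ v, w' v * C v := by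
    have hsplit : ∑ v, w' v * (C v : ℝ) = w' r * C r + ∑ v ∈ univ.erase r, w' v * C v :=
      (Finset.add_sum_erase _ _ (mem_univ r)).symm
    have hCsum' : ∑ v ∈ univ.erase r, (C v : ℝ) = (⌊M / K⌋₊ : ℝ) + 1 := by
      have : ∑ v, C v = C r + ∑ v ∈ univ.erase r, C v := (Finset.add_sum_erase _ _ (mem_univ r)).symm
      rw [this, hCr] at hCsum
      have h0 : ∑ v ∈ univ.erase r, C v = ⌊M / K⌋₊ + 1 := by omega
      exact_mod_cast h0
    rw [hsplit, hCr]
    push_cast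
    rw [mul_zero, zero_add, ← hCsum', Finset.mul_sum]
    apply Finset.sum_le_sum
    intro v hv
    have hvr := (Finset.mem_erase.1 hv).1
    exact mul_le_mul_of_nonneg_right (hlow v hvr) (Nat.cast_nonneg _)
  have h3 : M < K * ((⌊M / K⌋₊ : ℝ) + 1) := by
    have := Nat.lt_floor_add_one (M / K)
    calc M = K * (M / K) := by field_simp
      _ < K * ((⌊M / K⌋₊ : ℝ) + 1) := by
          apply mul_lt_mul_of_pos_left _ hK
          exact_mod_cast this
  linarith
end
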